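/- Let X be a Baire separable metrizable topological vector space and T a continuous linear operator on X with dense range and dense generalized kernel (the union of ker T^n over n ≥ 1 is dense). Then T is supercyclic: there exists x ∈ X such that {λ T^n x : λ ∈ K, n ∈ ℤ₊} is dense in X. -/

import Mathlib

open Topology Filter


/-- Let `X` be a Baire separable metrizable topological vector space and `T` a
continuous linear operator on `X` with dense range and dense generalized kernel
(`⋃_{n≥1} ker T^n` is dense). Then `T` is supercyclic: there exists `x ∈ X` such
that `{λ T^n x : λ ∈ K, n ∈ ℤ₊}` is dense in `X`. -/
theorem stmt_8 (𝕜 : Type*) [RCLike 𝕜] (X : Type*) [AddCommGroup X] [Module 𝕜 X]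
    [TopologicalSpace X] [IsTopologicalAddGroup X] [ContinuousSMul 𝕜 X]
    [BaireSpace X] [TopologicalSpace.SeparableSpace X] [TopologicalSpace.MetrizableSpace X]
    (T : X →L[𝕜] X)
    (hrange : Dense (Set.range ⇑T))
    (hker : Dense (⋃ n : ℕ, (LinearMap.ker ((T ^ (n + 1) : X →L[𝕜] X) : X →ₗ[𝕜] X) : Set X))) :
    ∃ x : X, Dense {y : X | ∃ (c : 𝕜) (n : ℕ), y = c • (T ^ n) x} := by
  have : Nonempty X := ⟨0⟩
  letI := TopologicalSpace.metrizableSpaceMetric X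
  haveI : SecondCountableTopology X :=
    UniformSpace.secondCountable_of_separable X
  -- dense range of all powers
  have hpow : ∀ n : ℕ, DenseRange ⇑(T ^ n) := by
    intro n
    induction n with
    | zero => simpa [pow_zero] using denseRange_id
    | succ n ih =>
      have : (⇑(T ^ (n + 1)) : X → X) = ⇑T ∘ ⇑(T ^ n) := by
        rw [pow_succ']; rfl
      rw [this]
      exact DenseRange.comp hrange ih T.continuous
  -- the open sets
  set O : Set X → Set X := fun V =>
    ⋃ (c : 𝕜) (n : ℕ), (fun x => c • (T ^ n) x) ⁻¹' V with hO
  have hOopen : ∀ V : Set X, IsOpen V → IsOpen (O V) := by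
    intro V hV
    exact isOpen_iUnion fun c => isOpen_iUnion fun n =>
      hV.preimage ((T ^ n).continuous.const_smul c)
  have hOdense : ∀ V : Set X, IsOpen V → V.Nonempty → Dense (O V) := by
    intro V hV ⟨v, hv⟩
    rw [dense_iff_inter_open]
    intro U hU hUne
    -- pick u ∈ U in generalized kernel
    obtain ⟨u, huU, hum⟩ := hker.inter_open_nonempty U hU hUne
    obtain ⟨s, ⟨m, rfl⟩, hus⟩ := hum
    have humker : (T ^ (m + 1)) u = 0 := hus
    -- pick v' with T^(m+1) v' ∈ V
    obtain ⟨v', hv'⟩ := (hpow (m + 1)).exists_mem_open hV ⟨v, hv⟩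
    -- pick small nonzero δ
    have hcont : Continuous fun δ : 𝕜 => u + δ • v' := by continuity
    have hmem : (fun δ : 𝕜 => u + δ • v') ⁻¹' U ∈ nhds (0 : 𝕜) := by
      apply hcont.continuousAt.preimage_mem_nhds
      simpa using hU.mem_nhds huU
    obtain ⟨δ, hδU, hδ0⟩ :
        ∃ δ : 𝕜, δ ∈ (fun δ : 𝕜 => u + δ • v') ⁻¹' U ∧ δ ≠ (0 : 𝕜) := by
      have h2 : ((fun δ : 𝕜 => u + δ • v') ⁻¹' U) ∩ {(0 : 𝕜)}ᶜ ∈ 𝓝[≠] (0 : 𝕜) :=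
        Filter.inter_mem (nhdsWithin_le_nhds hmem) self_mem_nhdsWithin
      obtain ⟨δ, hδ⟩ := Filter.nonempty_of_mem h2
      exact ⟨δ, hδ.1, hδ.2⟩
    refine ⟨u + δ • v', hδU, ?_⟩
    refine Set.mem_iUnion.mpr ⟨δ⁻¹, Set.mem_iUnion.mpr ⟨m + 1, ?_⟩⟩
    have : (T ^ (m + 1)) (u + δ • v') = δ • (T ^ (m + 1)) v' := by
      rw [map_add, humker, map_smul, zero_add]
    simp only [Set.mem_preimage, this, smul_smul, inv_mul_cancel₀ hδ0, one_smul]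
    exact hv'
  -- countable basis, Baire
  set B := TopologicalSpace.countableBasis X
  have hB := TopologicalSpace.isBasis_countableBasis X
  have hc : {V : Set X | V ∈ B ∧ V.Nonempty}.Countable :=
    (TopologicalSpace.countable_countableBasis X).mono fun V hV => hV.1
  haveI : Countable {V : Set X // V ∈ B ∧ V.Nonempty} := hc.to_subtype
  have hGdense : Dense (⋂ V : {V : Set X // V ∈ B ∧ V.Nonempty}, O V.val) :=
    dense_iInter_of_isOpen
      (fun V => hOopen V.val (hB.isOpen V.prop.1))
      (fun V => hOdense V.val (hB.isOpen V.prop.1) V.prop.2)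
  obtain ⟨x, hx⟩ := hGdense.nonempty
  refine ⟨x, hB.dense_iff.mpr ?_⟩
  intro o ho hone
  obtain ⟨c, hc'⟩ := Set.mem_iUnion.mp
    (Set.mem_iInter.mp hx ⟨o, ho, hone⟩)
  obtain ⟨n, hn⟩ := Set.mem_iUnion.mp hc'
  exact ⟨c • (T ^ n) x, hn, c, n, rfl⟩
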